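/- For a combinatorial hypermap (σ, α) on darts B = {1,...,n} with vertices V = orbits of σ, edges E = orbits of α, faces F = orbits of α^{−1}σ, the F_2 hypermap homology spaces satisfy dim H_0 = 1, dim H_2 = 1, and dim H_1 = n + 2 − |V| − |E| − |F|. -/

import Mathlib

open Matrix

section Hypermap

variable (n : ℕ)

/-- The set of orbits of a permutation `σ` of the darts `B = Fin n`; for a hypermap
`(σ, α)` the orbits of `σ` are the vertices, those of `α` the edges, and those of
the face permutation the faces. -/
abbrev orbQ (σ : Equiv.Perm (Fin n)) : Type :=
  Quotient (MulAction.orbitRel (Subgroup.zpowers σ) (Fin n))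

noncomputable instance (σ : Equiv.Perm (Fin n)) : Fintype (orbQ n σ) :=
  Fintype.ofFinite _

/-- The orbit (vertex/edge/face) containing a given dart. -/
abbrev cls (σ : Equiv.Perm (Fin n)) (i : Fin n) : orbQ n σ :=
  Quotient.mk (MulAction.orbitRel (Subgroup.zpowers σ) (Fin n)) i

open Classical in
/-- Matrix of `d_1 : W → 𝒱`, `w_i ↦ v_{∋i} + v_{∋α⁻¹(i)}`. -/
noncomputable def d1mat (σ α : Equiv.Perm (Fin n)) :
    Matrix (orbQ n σ) (Fin n) (ZMod 2) :=
  Matrix.of fun q i =>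
    (if cls n σ i = q then 1 else 0) + (if cls n σ (α⁻¹ i) = q then 1 else 0)

open Classical in
/-- Matrix of `ι : ℰ → W`, `e ↦ ∑_{i ∈ e} w_i`. -/
noncomputable def iotaMat (α : Equiv.Perm (Fin n)) :
    Matrix (Fin n) (orbQ n α) (ZMod 2) :=
  Matrix.of fun i e => if cls n α i = e then 1 else 0

open Classical in
/-- Matrix of `d_2 : ℱ → W`, `f ↦ ∑_{i ∈ f} w_i`; here the face permutation
`α⁻¹σ` (multiplying left to right) is `σ ∘ α⁻¹ = σ * α⁻¹` in Lean's convention. -/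
noncomputable def d2mat (σ α : Equiv.Perm (Fin n)) :
    Matrix (Fin n) (orbQ n (σ * α⁻¹)) (ZMod 2) :=
  Matrix.of fun i f => if cls n (σ * α⁻¹) i = f then 1 else 0

end Hypermap

section Aux
open Classical
variable {n : ℕ}

lemma cls_surj (σ : Equiv.Perm (Fin n)) : Function.Surjective (cls n σ) :=
  fun q => Quotient.inductionOn q fun i => ⟨i, rfl⟩

lemma cls_apply (σ : Equiv.Perm (Fin n)) (i : Fin n) :
    cls n σ (σ i) = cls n σ i :=
  Quotient.sound ⟨⟨σ, Subgroup.mem_zpowers σ⟩, rfl⟩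

lemma iota_apply (α : Equiv.Perm (Fin n)) (c : orbQ n α → ZMod 2) (i : Fin n) :
    (iotaMat n α).mulVecLin c i = c (cls n α i) := by
  simp [iotaMat, Matrix.mulVecLin_apply, Matrix.mulVec, dotProduct, ite_mul]

lemma d2_apply (σ α : Equiv.Perm (Fin n)) (f : orbQ n (σ * α⁻¹) → ZMod 2) (i : Fin n) :
    (d2mat n σ α).mulVecLin f i = f (cls n (σ * α⁻¹) i) := by
  simp [d2mat, Matrix.mulVecLin_apply, Matrix.mulVec, dotProduct, ite_mul]

lemma d1T_apply (σ α : Equiv.Perm (Fin n)) (φ : orbQ n σ → ZMod 2) (i : Fin n) :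
    (d1mat n σ α)ᵀ.mulVecLin φ i = φ (cls n σ i) + φ (cls n σ (α⁻¹ i)) := by
  simp [d1mat, Matrix.mulVecLin_apply, Matrix.mulVec, dotProduct,
    Matrix.vecMul, mul_add, mul_ite, mul_one, mul_zero, Finset.sum_add_distrib,
    Finset.sum_ite_eq]

lemma d1_apply (σ α : Equiv.Perm (Fin n)) (w : Fin n → ZMod 2) (q : orbQ n σ) :
    (d1mat n σ α).mulVecLin w q =
      (∑ i, (if cls n σ i = q then 1 else 0) * w i) +
      ∑ i, (if cls n σ (α⁻¹ i) = q then 1 else 0) * w i := by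
  simp [d1mat, Matrix.mulVecLin_apply, Matrix.mulVec, dotProduct,
    add_mul, Finset.sum_add_distrib]

end Aux
section Aux2
open Classical
variable {n : ℕ}

lemma invariant_const {σ α : Equiv.Perm (Fin n)}
    (htrans : ∀ i j : Fin n,
      ∃ g ∈ Subgroup.closure ({σ, α} : Set (Equiv.Perm (Fin n))), g i = j)
    (T : Fin n → ZMod 2) (hσ : ∀ i, T (σ i) = T i) (hα : ∀ i, T (α i) = T i) :
    ∀ i j, T i = T j := by
  have key : ∀ g ∈ Subgroup.closure ({σ, α} : Set (Equiv.Perm (Fin n))),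
      ∀ i, T (g i) = T i := by
    intro g hg
    induction hg using Subgroup.closure_induction with
    | mem x hx =>
      rcases hx with rfl | hx
      · exact hσ
      · rw [Set.mem_singleton_iff] at hx; subst hx; exact hα
    | one => simp
    | mul x y hx hy ihx ihy =>
      intro i
      rw [Equiv.Perm.mul_apply, ihx, ihy]
    | inv x hx ih =>
      intro i
      have := ih (x⁻¹ i)
      simp only [Equiv.Perm.inv_def, Equiv.apply_symm_apply] at this
      exact this.symm
  intro i j
  obtain ⟨g, hg, hgi⟩ := htrans i j
  rw [← hgi, key g hg i]

lemma zmod2_add_self : ∀ a : ZMod 2, a + a = 0 := by decide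

lemma zmod2_add_eq_zero : ∀ a b : ZMod 2, a + b = 0 ↔ a = b := by decide

end Aux2
section Aux3
open Classical
variable {n : ℕ}

lemma iota_ker (α : Equiv.Perm (Fin n)) :
    LinearMap.ker (iotaMat n α).mulVecLin = ⊥ := by
  rw [LinearMap.ker_eq_bot']
  intro c hc
  funext e
  obtain ⟨i, rfl⟩ := cls_surj α e
  have := congrFun hc i
  rw [iota_apply] at this
  simpa using this

lemma ker_d1T (hn : 0 < n) (σ α : Equiv.Perm (Fin n))
    (htrans : ∀ i j : Fin n,
      ∃ g ∈ Subgroup.closure ({σ, α} : Set (Equiv.Perm (Fin n))), g i = j) :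
    LinearMap.ker (d1mat n σ α)ᵀ.mulVecLin =
      Submodule.span (ZMod 2) {(fun _ => 1 : orbQ n σ → ZMod 2)} := by
  apply le_antisymm
  · intro φ hφ
    rw [LinearMap.mem_ker] at hφ
    have heq : ∀ i, φ (cls n σ i) = φ (cls n σ (α⁻¹ i)) := by
      intro i
      have h := congrFun hφ i
      rw [d1T_apply] at h
      exact (zmod2_add_eq_zero _ _).mp h
    have hσ' : ∀ i, φ (cls n σ (σ i)) = φ (cls n σ i) := fun i => by rw [cls_apply]
    have hα' : ∀ i, φ (cls n σ (α i)) = φ (cls n σ i) := by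
      intro i
      have h := heq (α i)
      rwa [Equiv.Perm.inv_def, Equiv.symm_apply_apply] at h
    have hconst := invariant_const htrans (fun i => φ (cls n σ i)) hσ' hα'
    have i0 : Fin n := ⟨0, hn⟩
    rw [Submodule.mem_span_singleton]
    refine ⟨φ (cls n σ i0), funext fun q => ?_⟩
    obtain ⟨i, rfl⟩ := cls_surj σ q
    simpa using (hconst i i0).symm
  · rw [Submodule.span_le, Set.singleton_subset_iff, SetLike.mem_coe, LinearMap.mem_ker]
    funext i
    rw [d1T_apply]
    simp [zmod2_add_self]

lemma d1_d2 (σ α : Equiv.Perm (Fin n)) (f : orbQ n (σ * α⁻¹) → ZMod 2) :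
    (d1mat n σ α).mulVecLin ((d2mat n σ α).mulVecLin f) = 0 := by
  funext q
  rw [d1_apply]
  set w := (d2mat n σ α).mulVecLin f with hw
  have hwσα : ∀ j, w (σ j) = w (α j) := by
    intro j
    rw [hw, d2_apply, d2_apply]
    congr 1
    have h : (σ * α⁻¹) (α j) = σ j := by
      rw [Equiv.Perm.mul_apply, Equiv.Perm.inv_def, Equiv.symm_apply_apply]
    rw [← h, cls_apply]
  have h1 : (∑ i, (if cls n σ i = q then 1 else 0) * w i)
      = ∑ j, (if cls n σ j = q then (1 : ZMod 2) else 0) * w (σ j) := by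
    rw [← Equiv.sum_comp σ (fun i => (if cls n σ i = q then (1 : ZMod 2) else 0) * w i)]
    simp only [cls_apply]
  have h2 : (∑ i, (if cls n σ (α⁻¹ i) = q then 1 else 0) * w i)
      = ∑ j, (if cls n σ j = q then (1 : ZMod 2) else 0) * w (α j) := by
    rw [← Equiv.sum_comp α
      (fun i => (if cls n σ (α⁻¹ i) = q then (1 : ZMod 2) else 0) * w i)]
    simp only [Equiv.Perm.inv_def, Equiv.symm_apply_apply]
  rw [h1, h2]
  simp only [hwσα]
  rw [← Finset.sum_add_distrib]
  simp [zmod2_add_self]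

end Aux3


open Classical in
/-- For a combinatorial hypermap `(σ, α)` on darts `B = {1, …, n}`, with vertices,
edges and faces the orbits of `σ`, `α` and `α⁻¹σ`, the `F_2` hypermap homology
`ℱ --∂₂--> W/ι(ℰ) --∂₁--> 𝒱` satisfies `dim H_0 = 1`, `dim H_2 = 1`, and
`dim H_1 = n + 2 − |V| − |E| − |F|`. -/
theorem hypermap_homology_dims (n : ℕ) (hn : 0 < n)
    (σ α : Equiv.Perm (Fin n))
    (htrans : ∀ i j : Fin n,
      ∃ g ∈ Subgroup.closure ({σ, α} : Set (Equiv.Perm (Fin n))), g i = j)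
    (bd1 : ((Fin n → ZMod 2) ⧸ LinearMap.range (iotaMat n α).mulVecLin)
            →ₗ[ZMod 2] (orbQ n σ → ZMod 2))
    (hbd1 : ∀ w : Fin n → ZMod 2,
      bd1 (Submodule.Quotient.mk w) = (d1mat n σ α).mulVecLin w)
    (bd2 : (orbQ n (σ * α⁻¹) → ZMod 2)
            →ₗ[ZMod 2] ((Fin n → ZMod 2) ⧸ LinearMap.range (iotaMat n α).mulVecLin))
    (hbd2 : ∀ f : orbQ n (σ * α⁻¹) → ZMod 2,
      bd2 f = Submodule.Quotient.mk ((d2mat n σ α).mulVecLin f)) :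
    Module.finrank (ZMod 2) ((orbQ n σ → ZMod 2) ⧸ LinearMap.range bd1) = 1 ∧
    Module.finrank (ZMod 2) (LinearMap.ker bd2) = 1 ∧
    Module.finrank (ZMod 2)
        ((LinearMap.ker bd1) ⧸
          (LinearMap.range bd2).comap (LinearMap.ker bd1).subtype) =
      n + 2 - Fintype.card (orbQ n σ) - Fintype.card (orbQ n α)
        - Fintype.card (orbQ n (σ * α⁻¹)) := by
  have i0 : Fin n := ⟨0, hn⟩
  -- range bd1 = range d1
  have hcomp1 : bd1.comp (LinearMap.range (iotaMat n α).mulVecLin).mkQ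
      = (d1mat n σ α).mulVecLin := LinearMap.ext fun w => hbd1 w
  have hrange1 : LinearMap.range bd1 = LinearMap.range (d1mat n σ α).mulVecLin := by
    rw [← hcomp1, LinearMap.range_comp, Submodule.range_mkQ, Submodule.map_top]
  -- rank of d1: corank 1
  have hone : (fun _ => (1 : ZMod 2) : orbQ n σ → ZMod 2) ≠ 0 := by
    intro h; exact one_ne_zero (congrFun h (cls n σ i0))
  have hrkT := LinearMap.finrank_range_add_finrank_ker (d1mat n σ α)ᵀ.mulVecLin
  rw [ker_d1T hn σ α htrans, finrank_span_singleton hone,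
    Module.finrank_fintype_fun_eq_card] at hrkT
  have hrk1 : Module.finrank (ZMod 2) (LinearMap.range (d1mat n σ α).mulVecLin) + 1
      = Fintype.card (orbQ n σ) := by
    have h1 : Module.finrank (ZMod 2) (LinearMap.range (d1mat n σ α).mulVecLin)
        = (d1mat n σ α).rank := rfl
    have h2 : Module.finrank (ZMod 2) (LinearMap.range (d1mat n σ α)ᵀ.mulVecLin)
        = (d1mat n σ α)ᵀ.rank := rfl
    rw [h1, ← Matrix.rank_transpose, ← h2, hrkT]
  -- H0
  have e0 := Submodule.finrank_quotient_add_finrank (LinearMap.range bd1)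
  rw [Module.finrank_fintype_fun_eq_card, hrange1] at e0
  have H0 : Module.finrank (ZMod 2)
      ((orbQ n σ → ZMod 2) ⧸ LinearMap.range bd1) = 1 := by rw [hrange1]; omega
  -- ker bd2 = span of all-ones
  have hker2 : LinearMap.ker bd2
      = Submodule.span (ZMod 2) {(fun _ => 1 : orbQ n (σ * α⁻¹) → ZMod 2)} := by
    apply le_antisymm
    · intro f hf
      rw [LinearMap.mem_ker, hbd2, Submodule.Quotient.mk_eq_zero] at hf
      obtain ⟨c, hc⟩ := hf
      have hpt : ∀ i, c (cls n α i) = f (cls n (σ * α⁻¹) i) := by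
        intro i
        have h := congrFun hc i
        rwa [iota_apply, d2_apply] at h
      have hφinv : ∀ i, f (cls n (σ * α⁻¹) ((σ * α⁻¹) i)) = f (cls n (σ * α⁻¹) i) :=
        fun i => by rw [cls_apply]
      have hαinv : ∀ i, f (cls n (σ * α⁻¹) (α i)) = f (cls n (σ * α⁻¹) i) := by
        intro i
        rw [← hpt (α i), ← hpt i, cls_apply]
      have hσinv : ∀ i, f (cls n (σ * α⁻¹) (σ i)) = f (cls n (σ * α⁻¹) i) := by
        intro i
        have h : σ i = (σ * α⁻¹) (α i) := by
          rw [Equiv.Perm.mul_apply, Equiv.Perm.inv_def, Equiv.symm_apply_apply]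
        rw [h, hφinv, hαinv]
      have hconst := invariant_const htrans
        (fun i => f (cls n (σ * α⁻¹) i)) hσinv hαinv
      rw [Submodule.mem_span_singleton]
      refine ⟨f (cls n (σ * α⁻¹) i0), funext fun q => ?_⟩
      obtain ⟨i, rfl⟩ := cls_surj _ q
      simpa using (hconst i i0).symm
    · rw [Submodule.span_le, Set.singleton_subset_iff, SetLike.mem_coe,
        LinearMap.mem_ker, hbd2, Submodule.Quotient.mk_eq_zero]
      exact ⟨fun _ => 1, by funext i; rw [iota_apply, d2_apply]⟩
  have hone2 : (fun _ => (1 : ZMod 2) : orbQ n (σ * α⁻¹) → ZMod 2) ≠ 0 := by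
    intro h; exact one_ne_zero (congrFun h (cls n (σ * α⁻¹) i0))
  have H2 : Module.finrank (ZMod 2) (LinearMap.ker bd2) = 1 := by
    rw [hker2]; exact finrank_span_singleton hone2
  -- rank-nullity for bd2
  have rn2 := LinearMap.finrank_range_add_finrank_ker bd2
  rw [H2, Module.finrank_fintype_fun_eq_card] at rn2
  -- iota injective, dim of W/iota(E)
  have rnι := LinearMap.finrank_range_add_finrank_ker (iotaMat n α).mulVecLin
  rw [iota_ker, finrank_bot, Module.finrank_fintype_fun_eq_card] at rnι
  have eW := Submodule.finrank_quotient_add_finrank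
    (LinearMap.range (iotaMat n α).mulVecLin)
  rw [Module.finrank_fintype_fun_eq_card, Fintype.card_fin] at eW
  -- rank-nullity for bd1
  have rn1 := LinearMap.finrank_range_add_finrank_ker bd1
  rw [hrange1] at rn1
  -- range bd2 ≤ ker bd1
  have hle : LinearMap.range bd2 ≤ LinearMap.ker bd1 := by
    rintro x ⟨f, rfl⟩
    rw [LinearMap.mem_ker, hbd2, hbd1, d1_d2]
  have ecomap : Module.finrank (ZMod 2)
      ((LinearMap.range bd2).comap (LinearMap.ker bd1).subtype)
      = Module.finrank (ZMod 2) (LinearMap.range bd2) :=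
    (Submodule.comapSubtypeEquivOfLe hle).finrank_eq
  have e1 := Submodule.finrank_quotient_add_finrank
    ((LinearMap.range bd2).comap (LinearMap.ker bd1).subtype)
  rw [ecomap] at e1
  exact ⟨H0, H2, by omega⟩
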